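/- arXiv:0806.4760 — 7 statements merged into one kernel-verified Lean document; each statement's English description precedes it below -/
import Mathlib

section
/- Every abelian Polish group H, with a fixed compatible complete separable metric d, has a countable dense subgroup D with the following property (*): for every n ≥ 1, points c₁,…,cₙ ∈ D, positive rational ε, setting Uᵢ = {x ∈ H : d(x,cᵢ) ≤ ε}, and every finite system P of equations of the form b₁x₁ ⊕ ⋯ ⊕ bₙxₙ = r with integer coefficients bᵢ and constants r ∈ D: if P has a solution ⟨x₁,…,xₙ⟩ in H with xᵢ ∈ Uᵢ for all i, then P has a solution with xᵢ ∈ D ∩ Uᵢ for all i. -/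
open Pointwise

/-- A rational ball: a set of the form `{x | d(c,x) < ε}` with center `c ∈ D`
and positive rational radius `ε`. -/
def IsRationalBall {H : Type*} [MetricSpace H] (D : Set H) (B : Set H) : Prop :=
  ∃ c ∈ D, ∃ ε : ℚ, 0 < ε ∧ B = {x : H | dist c x < (ε : ℝ)}

/-- Property (*): any finite system of linear equations with integer coefficients and
constants in `D` that has a solution in given closed rational balls centered in `D`
also has a solution in `D` inside the same balls. -/
def PropertyStar {H : Type*} [MetricSpace H] [AddCommGroup H] (D : AddSubgroup H) : Prop :=
  ∀ n : ℕ, 1 ≤ n → ∀ c : Fin n → H, (∀ i, c i ∈ D) → ∀ ε : ℚ, 0 < ε →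
    ∀ P : Finset ((Fin n → ℤ) × H), (∀ p ∈ P, p.2 ∈ D) →
    (∃ x : Fin n → H, (∀ i, dist (x i) (c i) ≤ (ε : ℝ)) ∧
      ∀ p ∈ P, ∑ i, p.1 i • x i = p.2) →
    ∃ x : Fin n → H, (∀ i, x i ∈ D ∧ dist (x i) (c i) ≤ (ε : ℝ)) ∧
      ∀ p ∈ P, ∑ i, p.1 i • x i = p.2

/-- The index set `A`: tuples of pairwise disjoint nonempty rational balls whose union is
a nonempty proper subset of `H`, together with points `r i ∈ U i ∩ D` satisfying the
coherence condition of Definition 3.1. -/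
structure IndexElem (H : Type*) [MetricSpace H] [AddCommGroup H] (D : AddSubgroup H) where
  n : ℕ
  U : Fin n → Set H
  r : Fin n → H
  isBall : ∀ i, IsRationalBall (D : Set H) (U i)
  ballNe : ∀ i, (U i).Nonempty
  disj : ∀ i j, i ≠ j → Disjoint (U i) (U j)
  unionNe : (⋃ i, U i).Nonempty
  proper : (⋃ i, U i) ≠ Set.univ
  rMemU : ∀ i, r i ∈ U i
  rMemD : ∀ i, r i ∈ D
  cond : ∀ i j : Fin n,
    (∃ k, r i + r j = r k ∧ (U i + U j) ∩ (⋃ l, U l) ⊆ U k) ∨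
    (U i + U j) ∩ (⋃ l, U l) = ∅

/-- `U^a`, the union of the balls of `a`. -/
def UA {H : Type*} [MetricSpace H] [AddCommGroup H] {D : AddSubgroup H}
    (a : IndexElem H D) : Set H := ⋃ i, a.U i

/-- The ideal `Z`: sets `X ⊆ A` for which some finite `u ⊆ H` satisfies `u ⊄ U^a`
for all `a ∈ X`. -/
def Zid {H : Type*} [MetricSpace H] [AddCommGroup H] (D : AddSubgroup H) :
    Set (Set (IndexElem H D)) :=
  {X | ∃ u : Set H, u.Finite ∧ ∀ a ∈ X, ¬ u ⊆ UA a}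

/-- The coordinate maps `f_a`: `f_a x = x - r^a_i` if `x ∈ U^a_i`, and `0` if `x ∉ U^a`. -/
noncomputable def fmap {H : Type*} [MetricSpace H] [AddCommGroup H] {D : AddSubgroup H}
    (a : IndexElem H D) (x : H) : H :=
  letI := Classical.dec (∃ i, x ∈ a.U i)
  if h : ∃ i, x ∈ a.U i then x - a.r h.choose else 0



theorem countable_lists {G : Type*} {t : Set G} (ht : t.Countable) :
    {l : List G | ∀ x ∈ l, x ∈ t}.Countable := by
  have := ht.to_subtype
  have hsub : {l : List G | ∀ x ∈ l, x ∈ t} ⊆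
      Set.range (fun l : List ↥t => l.map Subtype.val) := by
    intro l hl
    refine ⟨l.pmap (fun x hx => ⟨x, hx⟩) hl, ?_⟩
    simp [List.map_pmap]
  exact (Set.countable_range _).mono hsub

theorem countable_addClosure {G : Type*} [AddGroup G] {s : Set G} (hs : s.Countable) :
    (AddSubgroup.closure s : Set G).Countable := by
  have hns : (-s).Countable := hs.preimage neg_injective
  have ht : (s ∪ -s).Countable := hs.union hns
  refine ((countable_lists ht).image List.sum).mono ?_
  intro x hx
  have hx' : x ∈ AddSubmonoid.closure (s ∪ -s) := by
    rw [← AddSubgroup.closure_toAddSubmonoid]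
    exact hx
  obtain ⟨l, h1, h2⟩ := AddSubmonoid.exists_list_of_mem_closure hx'
  exact ⟨l, h1, h2⟩

section Star

variable {H : Type*} [MetricSpace H] [AddCommGroup H]

/-- An "instance": a number `n` of variables, centers, a radius, and a finite system. -/
def Inst (H : Type*) : Type _ := Σ n : ℕ, (Fin n → H) × ℚ × Finset ((Fin n → ℤ) × H)

def hasSol (I : Inst H) : Prop :=
  ∃ x : Fin I.1 → H, (∀ i, dist (x i) (I.2.1 i) ≤ (I.2.2.1 : ℝ)) ∧
    ∀ p ∈ I.2.2.2, ∑ i, p.1 i • x i = p.2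

noncomputable def wit (I : Inst H) : Fin I.1 → H := by
  classical exact if h : hasSol I then h.choose else fun _ => 0

theorem wit_spec {I : Inst H} (h : hasSol I) :
    (∀ i, dist (wit I i) (I.2.1 i) ≤ (I.2.2.1 : ℝ)) ∧
      ∀ p ∈ I.2.2.2, ∑ i, p.1 i • wit I i = p.2 := by
  have hs := h.choose_spec
  unfold wit
  classical
  rw [dif_pos h]
  · exact h.choose_spec
    
def goodInst (S : Set H) : Set (Inst H) :=
  {I | (∀ i, I.2.1 i ∈ S) ∧ ∀ p ∈ I.2.2.2, p.2 ∈ S}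

theorem countable_goodInst {S : Set H} (hS : S.Countable) : (goodInst S).Countable := by
  have key : ∀ n : ℕ,
      {q : (Fin n → H) × ℚ × Finset ((Fin n → ℤ) × H) |
        (∀ i, q.1 i ∈ S) ∧ ∀ p ∈ q.2.2, p.2 ∈ S}.Countable := by
    intro n
    have hA : {c : Fin n → H | ∀ i, c i ∈ S}.Countable :=
      Set.countable_pi fun _ : Fin n => hS
    have hT : {p : (Fin n → ℤ) × H | p.2 ∈ S}.Countable := by
      have : {p : (Fin n → ℤ) × H | p.2 ∈ S} =
          (Set.univ : Set (Fin n → ℤ)) ×ˢ S := by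
        ext p; simp
      rw [this]
      exact Set.countable_univ.prod hS
    have hB : {P : Finset ((Fin n → ℤ) × H) |
        ∀ p ∈ P, p.2 ∈ S}.Countable := by
      have h1 := Set.countable_setOf_finite_subset hT
      have h2 : {P : Finset ((Fin n → ℤ) × H) | ∀ p ∈ P, p.2 ∈ S} ⊆
          ((↑) : Finset ((Fin n → ℤ) × H) → Set ((Fin n → ℤ) × H)) ⁻¹' {t | t.Finite ∧ t ⊆ {p : (Fin n → ℤ) × H | p.2 ∈ S}} := by
        intro P hP
        exact ⟨P.finite_toSet, fun p hp => hP p hp⟩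
      exact (h1.preimage Finset.coe_injective).mono h2
    have : {q : (Fin n → H) × ℚ × Finset ((Fin n → ℤ) × H) |
        (∀ i, q.1 i ∈ S) ∧ ∀ p ∈ q.2.2, p.2 ∈ S} ⊆
        {c : Fin n → H | ∀ i, c i ∈ S} ×ˢ
          ((Set.univ : Set ℚ) ×ˢ {P | ∀ p ∈ P, p.2 ∈ S}) := by
      rintro ⟨c, ε, P⟩ ⟨h1, h2⟩
      exact ⟨h1, trivial, h2⟩
    exact (hA.prod (Set.countable_univ.prod hB)).mono this
  have hsub : goodInst S ⊆ ⋃ n : ℕ, Sigma.mk n ''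
      {q : (Fin n → H) × ℚ × Finset ((Fin n → ℤ) × H) |
        (∀ i, q.1 i ∈ S) ∧ ∀ p ∈ q.2.2, p.2 ∈ S} := by
    rintro ⟨n, q⟩ hI
    exact Set.mem_iUnion.2 ⟨n, ⟨q, hI, rfl⟩⟩
  exact (Set.countable_iUnion fun n => (key n).image _).mono hsub

def step (S : Set H) : Set H := S ∪ ⋃ I ∈ goodInst S, Set.range (wit I)

theorem countable_step {S : Set H} (hS : S.Countable) : (step S).Countable :=
  hS.union ((countable_goodInst hS).biUnion fun I _ => Set.countable_range _)

noncomputable def Gk (s : Set H) : ℕ → AddSubgroup H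
  | 0 => AddSubgroup.closure s
  | (k+1) => AddSubgroup.closure (step (Gk s k : Set H))

theorem Gk_mono (s : Set H) : Monotone (Gk s) := by
  apply monotone_nat_of_le_succ
  intro k x hx
  exact AddSubgroup.subset_closure (Set.subset_union_left hx)

theorem Gk_countable {s : Set H} (hs : s.Countable) : ∀ k, (Gk s k : Set H).Countable
  | 0 => countable_addClosure hs
  | (k+1) => countable_addClosure (countable_step (Gk_countable hs k))

end Star

theorem exists_countable_dense_subgroup_with_star' (H : Type*) [MetricSpace H]
    [CompleteSpace H] [TopologicalSpace.SeparableSpace H]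
    [AddCommGroup H] [IsTopologicalAddGroup H] :
    ∃ D : AddSubgroup H, (D : Set H).Countable ∧ Dense (D : Set H) ∧
      (∀ n : ℕ, 1 ≤ n → ∀ c : Fin n → H, (∀ i, c i ∈ D) → ∀ ε : ℚ, 0 < ε →
      ∀ P : Finset ((Fin n → ℤ) × H), (∀ p ∈ P, p.2 ∈ D) →
      (∃ x : Fin n → H, (∀ i, dist (x i) (c i) ≤ (ε : ℝ)) ∧
        ∀ p ∈ P, ∑ i, p.1 i • x i = p.2) →
      ∃ x : Fin n → H, (∀ i, x i ∈ D ∧ dist (x i) (c i) ≤ (ε : ℝ)) ∧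
        ∀ p ∈ P, ∑ i, p.1 i • x i = p.2) := by
  obtain ⟨s, hsc, hsd⟩ := TopologicalSpace.exists_countable_dense H
  refine ⟨⨆ k, Gk s k, ?_, ?_, ?_⟩
  · have hdir : Directed (· ≤ ·) (Gk s) := (Gk_mono s).directed_le
    have hcoe : ((⨆ k, Gk s k : AddSubgroup H) : Set H) = ⋃ k, (Gk s k : Set H) := by
      ext x
      simp only [SetLike.mem_coe, Set.mem_iUnion]
      exact AddSubgroup.mem_iSup_of_directed hdir
    rw [hcoe]
    exact Set.countable_iUnion (Gk_countable hsc)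
  · refine hsd.mono ?_
    intro x hx
    have : x ∈ Gk s 0 := AddSubgroup.subset_closure hx
    exact SetLike.mem_coe.2 (le_iSup (Gk s) 0 this)
  · intro n hn c hc ε hε P hP hsol
    have hdir : Directed (· ≤ ·) (Gk s) := (Gk_mono s).directed_le
    have hmem : ∀ x : H, x ∈ (⨆ k, Gk s k : AddSubgroup H) ↔ ∃ k, x ∈ Gk s k :=
      fun x => AddSubgroup.mem_iSup_of_directed hdir
    classical
    -- find a common stage N
    set f : Fin n → ℕ := fun i => ((hmem (c i)).1 (hc i)).choose with hf
    set g : (Fin n → ℤ) × H → ℕ := fun p =>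
      if h : ∃ k, p.2 ∈ Gk s k then h.choose else 0 with hg
    set N : ℕ := max (Finset.univ.sup f) (P.sup g) with hN
    have hcN : ∀ i, c i ∈ Gk s N := by
      intro i
      have h1 : c i ∈ Gk s (f i) := ((hmem (c i)).1 (hc i)).choose_spec
      exact Gk_mono s (le_trans (Finset.le_sup (Finset.mem_univ i)) (le_max_left _ _)) h1
    have hPN : ∀ p ∈ P, p.2 ∈ Gk s N := by
      intro p hp
      have hex : ∃ k, p.2 ∈ Gk s k := (hmem p.2).1 (hP p hp)
      have h1 : p.2 ∈ Gk s (g p) := by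
        simp only [hg, dif_pos hex]
        exact hex.choose_spec
      exact Gk_mono s (le_trans (Finset.le_sup hp) (le_max_right _ _)) h1
    -- the instance
    set I : Inst H := ⟨n, c, ε, P⟩ with hI
    have hgood : I ∈ goodInst (Gk s N : Set H) := ⟨hcN, hPN⟩
    have hhas : hasSol I := hsol
    obtain ⟨hw1, hw2⟩ := wit_spec hhas
    refine ⟨wit I, fun i => ⟨?_, hw1 i⟩, hw2⟩
    have hstep : wit I i ∈ step (Gk s N : Set H) :=
      Set.mem_union_right _ (Set.mem_biUnion hgood (Set.mem_range_self i))
    have : wit I i ∈ Gk s (N + 1) := AddSubgroup.subset_closure hstep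
    exact (hmem _).2 ⟨N + 1, this⟩


theorem exists_countable_dense_subgroup_with_star (H : Type*) [MetricSpace H]
    [CompleteSpace H] [TopologicalSpace.SeparableSpace H]
    [AddCommGroup H] [IsTopologicalAddGroup H] :
    ∃ D : AddSubgroup H, (D : Set H).Countable ∧ Dense (D : Set H) ∧ PropertyStar D := by
  obtain ⟨D, h1, h2, h3⟩ := exists_countable_dense_subgroup_with_star' H
  exact ⟨D, h1, h2, h3⟩
end

section
/- If y₁,…,yₙ ∈ H are pairwise distinct, then there exist pairwise disjoint rational balls B₁,…,Bₙ with yᵢ ∈ Bᵢ for all i such that, setting B = B₁ ∪ ⋯ ∪ Bₙ, for all i,j ∈ {1,…,n} either there exists k with (Bᵢ ⊕ Bⱼ) ∩ B ⊆ Bₖ, or (Bᵢ ⊕ Bⱼ) ∩ B = ∅. -/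
open Pointwise

theorem exists_disjoint_rational_balls {H : Type*} [MetricSpace H] [CompleteSpace H]
    [TopologicalSpace.SeparableSpace H]
    [AddCommGroup H] [IsTopologicalAddGroup H] [Uncountable H]
    (D : AddSubgroup H) (hDcount : (D : Set H).Countable) (hDdense : Dense (D : Set H))
    (n : ℕ) (y : Fin n → H) (hy : Function.Injective y) :
    ∃ B : Fin n → Set H,
      (∀ i, IsRationalBall (D : Set H) (B i)) ∧
      (∀ i, y i ∈ B i) ∧
      (∀ i j, i ≠ j → Disjoint (B i) (B j)) ∧
      ∀ i j : Fin n,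
        (∃ k, (B i + B j) ∩ (⋃ l, B l) ⊆ B k) ∨ (B i + B j) ∩ (⋃ l, B l) = ∅ := by
  rcases Nat.eq_zero_or_pos n with hn | hn
  · subst hn
    exact ⟨Fin.elim0, fun i => i.elim0, fun i => i.elim0, fun i => i.elim0, fun i => i.elim0⟩
  have hne : Nonempty (Fin n) := ⟨⟨0, hn⟩⟩
  -- separation constant δ
  obtain ⟨δ, hδ, hδsep⟩ : ∃ δ : ℝ, 0 < δ ∧ ∀ i j : Fin n, i ≠ j → 5 * δ ≤ dist (y i) (y j) := by
    set S : Finset ℝ := ((Finset.univ ×ˢ Finset.univ).filter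
      (fun p : Fin n × Fin n => p.1 ≠ p.2)).image (fun p => dist (y p.1) (y p.2)) with hSdef
    by_cases hS : S.Nonempty
    · refine ⟨S.min' hS / 5, ?_, ?_⟩
      · have : 0 < S.min' hS := by
          rw [Finset.lt_min'_iff]
          intro b hb
          simp only [hSdef, Finset.mem_image, Finset.mem_filter] at hb
          obtain ⟨p, ⟨-, hp⟩, rfl⟩ := hb
          exact dist_pos.2 fun h => hp (hy h)
        linarith
      · intro i j hij
        have hmem : dist (y i) (y j) ∈ S := by
          simp only [hSdef, Finset.mem_image, Finset.mem_filter]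
          exact ⟨(i, j), ⟨by simp, hij⟩, rfl⟩
        have := S.min'_le _ hmem
        linarith
    · refine ⟨1, one_pos, fun i j hij => absurd ⟨dist (y i) (y j), ?_⟩ hS⟩
      simp only [hSdef, Finset.mem_image, Finset.mem_filter]
      exact ⟨(i, j), ⟨by simp, hij⟩, rfl⟩
  -- continuity of addition gives moduli η i j
  have hηex : ∀ i j : Fin n, ∃ η : ℝ, 0 < η ∧ ∀ u v : H,
      dist (y i) u < η → dist (y j) v < η → dist (y i + y j) (u + v) < δ := by
    intro i j
    have hc : ContinuousAt (fun p : H × H => p.1 + p.2) (y i, y j) :=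
      continuous_add.continuousAt
    have h1 : (fun p : H × H => p.1 + p.2) ⁻¹' (Metric.ball (y i + y j) δ) ∈
        nhds ((y i, y j) : H × H) :=
      hc.preimage_mem_nhds (Metric.ball_mem_nhds _ hδ)
    rw [mem_nhds_prod_iff] at h1
    obtain ⟨u, hu, v, hv, huv⟩ := h1
    obtain ⟨ε₁, hε₁, hball₁⟩ := Metric.mem_nhds_iff.1 hu
    obtain ⟨ε₂, hε₂, hball₂⟩ := Metric.mem_nhds_iff.1 hv
    refine ⟨min ε₁ ε₂, lt_min hε₁ hε₂, fun a b ha hb => ?_⟩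
    have hab : (a, b) ∈ u ×ˢ v := by
      constructor
      · exact hball₁ (by rw [Metric.mem_ball, dist_comm]; exact ha.trans_le (min_le_left _ _))
      · exact hball₂ (by rw [Metric.mem_ball, dist_comm]; exact hb.trans_le (min_le_right _ _))
    have := huv hab
    rw [Set.mem_preimage, Metric.mem_ball, dist_comm] at this
    exact this
  choose η hηpos hηspec using hηex
  set η₀ : ℝ := Finset.univ.inf' Finset.univ_nonempty
    (fun i => Finset.univ.inf' Finset.univ_nonempty (fun j => η i j)) with hη₀def
  have hη₀pos : 0 < η₀ := by
    rw [hη₀def, Finset.lt_inf'_iff]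
    intro i _
    rw [Finset.lt_inf'_iff]
    intro j _
    exact hηpos i j
  have hη₀le : ∀ i j, η₀ ≤ η i j := fun i j =>
    le_trans (Finset.inf'_le _ (Finset.mem_univ i)) (Finset.inf'_le _ (Finset.mem_univ j))
  -- pick a rational radius
  obtain ⟨ε, hε0, hεlt⟩ := exists_rat_btwn (show (0 : ℝ) < min δ η₀ / 2 by positivity)
  have hεpos : (0 : ℝ) < ε := hε0
  have h2εδ : 2 * (ε : ℝ) < δ := by
    have := min_le_left δ η₀; linarith
  have h2εη : ∀ i j, 2 * (ε : ℝ) < η i j := by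
    intro i j
    have := min_le_right δ η₀
    have := hη₀le i j
    linarith
  -- pick centers in D
  have hc : ∀ i : Fin n, ∃ c ∈ (D : Set H), dist (y i) c < (ε : ℝ) := fun i =>
    hDdense.exists_dist_lt (y i) hεpos
  choose c hcD hcdist using hc
  set B : Fin n → Set H := fun i => {x : H | dist (c i) x < (ε : ℝ)} with hBdef
  have hByd : ∀ i, ∀ x ∈ B i, dist (y i) x < 2 * (ε : ℝ) := by
    intro i x hx
    calc dist (y i) x ≤ dist (y i) (c i) + dist (c i) x := dist_triangle _ _ _
      _ < ε + ε := add_lt_add (hcdist i) hx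
      _ = 2 * ε := by ring
  have hmemB : ∀ i, y i ∈ B i := fun i => by
    simpa [hBdef, dist_comm] using hcdist i
  have hsum : ∀ i j : Fin n, ∀ x ∈ B i + B j, dist (y i + y j) x < δ := by
    intro i j x hx
    rw [Set.mem_add] at hx
    obtain ⟨u, hu, v, hv, rfl⟩ := hx
    exact hηspec i j u v ((hByd i u hu).trans (h2εη i j)) ((hByd j v hv).trans (h2εη i j))
  refine ⟨B, fun i => ⟨c i, hcD i, ε, by exact_mod_cast hεpos, rfl⟩, hmemB, ?_, ?_⟩
  · intro i j hij
    rw [Set.disjoint_left]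
    intro x hxi hxj
    have h1 := hByd i x hxi
    have h2 := hByd j x hxj
    have h3 := hδsep i j hij
    have := dist_triangle (y i) x (y j)
    rw [dist_comm x (y j)] at this
    linarith
  · intro i j
    by_cases hemp : (B i + B j) ∩ (⋃ l, B l) = ∅
    · exact Or.inr hemp
    · left
      obtain ⟨x, hxadd, hxun⟩ := Set.nonempty_iff_ne_empty.2 hemp
      obtain ⟨k, hk⟩ : ∃ k, x ∈ B k := by simpa using hxun
      refine ⟨k, fun z ⟨hzadd, hzun⟩ => ?_⟩
      obtain ⟨m, hm⟩ : ∃ m, z ∈ B m := by simpa using hzun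
      have hmk : m = k := by
        by_contra hne
        have h1 := hByd k x hk
        have h2 := hsum i j x hxadd
        have h3 := hByd m z hm
        have h4 := hsum i j z hzadd
        have h5 := hδsep m k hne
        have t1 := dist_triangle (y m) z (y k)
        have t2 := dist_triangle z (y i + y j) (y k)
        have t3 := dist_triangle (y i + y j) x (y k)
        rw [dist_comm z (y i + y j)] at t2
        rw [dist_comm x (y k)] at t3
        linarith
      exact hmk ▸ hm
end

section
/- Z is an ideal over A: it is closed under subsets and finite unions, it contains all finite subsets of A, and A itself does not belong to Z. -/
open Pointwise

lemma sum_triple {H : Type*} [AddCommGroup H] {m : ℕ} (y : Fin m → H) (i j k : Fin m) :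
    ∑ l, ((if l = i then (1:ℤ) else 0) + (if l = j then 1 else 0)
      - (if l = k then 1 else 0)) • y l = y i + y j - y k := by
  simp [add_smul, sub_smul, Finset.sum_add_distrib, Finset.sum_sub_distrib, ite_smul]

lemma exists_cover {H : Type*} [MetricSpace H]
    [AddCommGroup H] [IsTopologicalAddGroup H] [Uncountable H]
    (D : AddSubgroup H) (hDdense : Dense (D : Set H)) (hstar : PropertyStar D)
    (u : Set H) (hu : u.Finite) : ∃ a : IndexElem H D, u ⊆ UA a := by
  classical
  obtain ⟨s, hs0, hsu⟩ : ∃ s : Finset H, (0:H) ∈ s ∧ u ⊆ (s : Set H) :=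
    ⟨insert 0 hu.toFinset, Finset.mem_insert_self _ _, by
      intro y hy; simp [hu.mem_toFinset, hy]⟩
  set m := s.card with hm
  have hmpos : 0 < m := Finset.card_pos.2 ⟨0, hs0⟩
  haveI : Nonempty (Fin m) := ⟨⟨0, hmpos⟩⟩
  let e := s.equivFin
  set x : Fin m → H := fun i => (e.symm i : H) with hxdef
  have hxinj : Function.Injective x := fun a b h => by
    have := Subtype.coe_injective h
    exact e.symm.injective this
  have hxmem : ∀ y ∈ s, ∃ i, x i = y := by
    intro y hy
    exact ⟨e ⟨y, hy⟩, by simp [hxdef]⟩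
  -- a point outside s
  obtain ⟨z, hz⟩ : ∃ z : H, z ∉ (s : Set H) :=
    (s.finite_toSet.infinite_compl).nonempty
  -- gap γ
  let F1 : Finset ℝ := (Finset.univ.filter (fun p : Fin m × Fin m => p.1 ≠ p.2)).image
      (fun p => dist (x p.1) (x p.2))
  let F2 : Finset ℝ := (Finset.univ.filter
      (fun t : (Fin m × Fin m) × Fin m => x t.1.1 + x t.1.2 ≠ x t.2)).image
      (fun t => dist (x t.1.1 + x t.1.2) (x t.2))
  let F3 : Finset ℝ := Finset.univ.image (fun i : Fin m => dist z (x i))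
  set G : Finset ℝ := insert 1 (F1 ∪ F2 ∪ F3) with hG
  have hGne : G.Nonempty := ⟨1, Finset.mem_insert_self _ _⟩
  set γ : ℝ := G.min' hGne with hγ
  have hγpos : 0 < γ := by
    rw [hγ]
    rw [Finset.lt_min'_iff]
    intro b hb
    simp only [hG, Finset.mem_insert, Finset.mem_union] at hb
    rcases hb with rfl | (hb | hb) | hb
    · norm_num
    · simp only [F1, Finset.mem_image, Finset.mem_filter] at hb
      obtain ⟨p, ⟨-, hne⟩, rfl⟩ := hb
      exact dist_pos.2 (fun h => hne (hxinj h))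
    · simp only [F2, Finset.mem_image, Finset.mem_filter] at hb
      obtain ⟨t, ⟨-, hne⟩, rfl⟩ := hb
      exact dist_pos.2 hne
    · simp only [F3, Finset.mem_image] at hb
      obtain ⟨i, -, rfl⟩ := hb
      exact dist_pos.2 (fun h => hz (h ▸ (e.symm i).2))
  have hγ1 : ∀ i j : Fin m, i ≠ j → γ ≤ dist (x i) (x j) := by
    intro i j hij
    apply Finset.min'_le
    simp only [hG, Finset.mem_insert, Finset.mem_union]
    exact Or.inr (Or.inl (Or.inl (Finset.mem_image.2 ⟨(i,j), by simp [hij], rfl⟩)))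
  have hγ2 : ∀ i j l : Fin m, x i + x j ≠ x l → γ ≤ dist (x i + x j) (x l) := by
    intro i j l hne
    apply Finset.min'_le
    simp only [hG, Finset.mem_insert, Finset.mem_union]
    exact Or.inr (Or.inl (Or.inr (Finset.mem_image.2 ⟨((i,j),l), by simp [hne], rfl⟩)))
  have hγ3 : ∀ i : Fin m, γ ≤ dist z (x i) := by
    intro i
    apply Finset.min'_le
    simp only [hG, Finset.mem_insert, Finset.mem_union]
    exact Or.inr (Or.inr (Finset.mem_image.2 ⟨i, Finset.mem_univ _, rfl⟩))
  -- continuity modulus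
  have hcont : ∀ p : Fin m × Fin m, ∃ δ, 0 < δ ∧ ∀ a b : H,
      dist (x p.1) a < δ → dist (x p.2) b < δ →
      dist (x p.1 + x p.2) (a + b) < γ/8 := by
    intro p
    have h : ContinuousAt (fun q : H × H => q.1 + q.2) (x p.1, x p.2) :=
      continuous_add.continuousAt
    rw [Metric.continuousAt_iff] at h
    obtain ⟨δ, hδ, hh⟩ := h (γ/8) (by positivity)
    refine ⟨δ, hδ, fun a b ha hb => ?_⟩
    have hd : dist ((a, b) : H × H) (x p.1, x p.2) < δ := by
      rw [Prod.dist_eq]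
      exact max_lt (by rwa [dist_comm]) (by rwa [dist_comm])
    have := hh hd
    simpa [dist_comm] using this
  choose δf hδfpos hδf using hcont
  set δ : ℝ := Finset.univ.inf' Finset.univ_nonempty δf with hδdef
  have hδpos : 0 < δ := by
    rw [hδdef, Finset.lt_inf'_iff]
    exact fun p _ => hδfpos p
  have hδle : ∀ p : Fin m × Fin m, δ ≤ δf p := fun p =>
    Finset.inf'_le _ (Finset.mem_univ p)
  -- choose rational η
  set β : ℝ := min δ (γ/8) with hβ
  have hβpos : 0 < β := lt_min hδpos (by positivity)
  obtain ⟨η, hη0, hηβ⟩ : ∃ η : ℚ, 0 < (η:ℝ) ∧ (η:ℝ) < β/8 := by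
    obtain ⟨q, hq0, hq⟩ := exists_rat_btwn (show (0:ℝ) < β/8 by positivity)
    exact ⟨q, hq0, hq⟩
  have hηQ : 0 < η := by exact_mod_cast hη0
  -- approximate centers in D
  have hc : ∀ i : Fin m, ∃ c ∈ (D : Set H), dist (x i) c < (η:ℝ) :=
    fun i => hDdense.exists_dist_lt (x i) hη0
  choose c hcD hcdist using hc
  -- the system of equations
  set P : Finset ((Fin m → ℤ) × H) :=
    (Finset.univ.filter (fun t : (Fin m × Fin m) × Fin m => x t.1.1 + x t.1.2 = x t.2)).image
      (fun t => ((fun l => (if l = t.1.1 then (1:ℤ) else 0) + (if l = t.1.2 then 1 else 0)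
          - (if l = t.2 then 1 else 0)), (0:H))) with hP
  have hPD : ∀ p ∈ P, p.2 ∈ D := by
    intro p hp
    simp only [hP, Finset.mem_image] at hp
    obtain ⟨t, -, rfl⟩ := hp
    exact D.zero_mem
  have hsol : ∃ y : Fin m → H, (∀ i, dist (y i) (c i) ≤ (η:ℝ)) ∧
      ∀ p ∈ P, ∑ i, p.1 i • y i = p.2 := by
    refine ⟨x, fun i => (hcdist i).le, ?_⟩
    intro p hp
    simp only [hP, Finset.mem_image, Finset.mem_filter] at hp
    obtain ⟨t, ⟨-, ht⟩, rfl⟩ := hp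
    simp only
    rw [sum_triple x t.1.1 t.1.2 t.2, ht]
    abel
  obtain ⟨d, hd1, hd2⟩ := hstar m hmpos c hcD η hηQ P hPD hsol
  have hdD : ∀ i, d i ∈ D := fun i => (hd1 i).1
  have hdx : ∀ i, dist (d i) (x i) ≤ 2*(η:ℝ) := by
    intro i
    calc dist (d i) (x i) ≤ dist (d i) (c i) + dist (c i) (x i) := dist_triangle _ _ _
    _ ≤ (η:ℝ) + (η:ℝ) := add_le_add (hd1 i).2 (by rw [dist_comm]; exact (hcdist i).le)
    _ = 2*(η:ℝ) := by ring
  have hrel : ∀ i j k : Fin m, x i + x j = x k → d i + d j = d k := by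
    intro i j k hijk
    have hmem : ((fun l => (if l = i then (1:ℤ) else 0) + (if l = j then 1 else 0)
        - (if l = k then 1 else 0)), (0:H)) ∈ P := by
      simp only [hP, Finset.mem_image, Finset.mem_filter]
      exact ⟨((i,j),k), ⟨Finset.mem_univ _, hijk⟩, rfl⟩
    have := hd2 _ hmem
    simp only at this
    rw [sum_triple d i j k] at this
    linear_combination (norm := abel) this
  -- the balls
  set ρ : ℚ := 3*η with hρ
  have hρQ : 0 < ρ := by positivity
  have hρR : (ρ:ℝ) = 3*(η:ℝ) := by rw [hρ]; norm_cast
  set B : Fin m → Set H := fun i => {w | dist (d i) w < (ρ:ℝ)} with hB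
  -- basic distance estimate
  have hBx : ∀ i : Fin m, ∀ w ∈ B i, dist (x i) w < 5*(η:ℝ) := by
    intro i w hw
    calc dist (x i) w ≤ dist (x i) (d i) + dist (d i) w := dist_triangle _ _ _
    _ < 2*(η:ℝ) + (ρ:ℝ) := add_lt_add_of_le_of_lt (by rw [dist_comm]; exact hdx i) hw
    _ = 5*(η:ℝ) := by rw [hρR]; ring
  have h5β : 5*(η:ℝ) < β := by linarith
  have hβδ : β ≤ δ := min_le_left _ _
  have hβγ : β ≤ γ/8 := min_le_right _ _
  have hBsum : ∀ i j : Fin m, ∀ w ∈ B i + B j, dist (x i + x j) w < γ/8 := by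
    intro i j w hw
    obtain ⟨a, ha, b, hb, rfl⟩ := Set.mem_add.1 hw
    exact hδf (i, j) a b
      (lt_of_lt_of_le (lt_trans (hBx i a ha) h5β) (hβδ.trans (hδle (i,j))))
      (lt_of_lt_of_le (lt_trans (hBx j b hb) h5β) (hβδ.trans (hδle (i,j))))
  have hηγ : 5*(η:ℝ) < γ/8 := lt_of_lt_of_le h5β hβγ
  -- build the IndexElem
  refine ⟨⟨m, B, d, ?_, ?_, ?_, ?_, ?_, ?_, hdD, ?_⟩, ?_⟩
  · -- isBall
    exact fun i => ⟨d i, hdD i, ρ, hρQ, rfl⟩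
  · -- ballNe
    intro i
    exact ⟨d i, by simp [hB, hρR]; positivity⟩
  · -- disj
    intro i j hij
    rw [Set.disjoint_left]
    intro w hwi hwj
    have h1 := hBx i w hwi
    have h2 := hBx j w hwj
    have := hγ1 i j hij
    have : γ ≤ dist (x i) w + dist w (x j) :=
      le_trans this (dist_triangle _ _ _)
    rw [dist_comm w (x j)] at this
    have hγ8 : γ/8 + γ/8 < γ := by linarith
    linarith
  · -- unionNe
    exact ⟨d ⟨0, hmpos⟩, Set.mem_iUnion.2 ⟨⟨0, hmpos⟩, by simp [hB, hρR]; positivity⟩⟩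
  · -- proper
    intro hcontra
    have hzU : z ∈ ⋃ l, B l := hcontra ▸ Set.mem_univ z
    obtain ⟨i, hi⟩ := Set.mem_iUnion.1 hzU
    have h1 := hBx i z hi
    have h2 := hγ3 i
    rw [dist_comm] at h2
    linarith
  · -- rMemU
    intro i
    simp only [hB, Set.mem_setOf_eq, dist_self]
    rw [hρR]; positivity
  · -- cond
    intro i j
    by_cases h : ∃ k, x i + x j = x k
    · obtain ⟨k, hk⟩ := h
      left
      refine ⟨k, hrel i j k hk, ?_⟩
      rintro w ⟨hw1, hw2⟩
      obtain ⟨l, hl⟩ := Set.mem_iUnion.1 hw2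
      rcases eq_or_ne l k with rfl | hlk
      · exact hl
      · exfalso
        have h1 := hBsum i j w hw1
        have h2 := hBx l w hl
        have hne : x i + x j ≠ x l := by
          rw [hk]; intro hh; exact hlk (hxinj hh.symm)
        have h3 := hγ2 i j l hne
        have : dist (x i + x j) (x l) ≤ dist (x i + x j) w + dist w (x l) :=
          dist_triangle _ _ _
        rw [dist_comm w (x l)] at this
        linarith
    · right
      rw [Set.eq_empty_iff_forall_notMem]
      rintro w ⟨hw1, hw2⟩
      obtain ⟨l, hl⟩ := Set.mem_iUnion.1 hw2
      have h1 := hBsum i j w hw1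
      have h2 := hBx l w hl
      have hne : x i + x j ≠ x l := fun hh => h ⟨l, hh⟩
      have h3 := hγ2 i j l hne
      have : dist (x i + x j) (x l) ≤ dist (x i + x j) w + dist w (x l) :=
        dist_triangle _ _ _
      rw [dist_comm w (x l)] at this
      linarith
  · -- u ⊆ UA
    intro y hy
    obtain ⟨i, rfl⟩ := hxmem y (hsu hy)
    refine Set.mem_iUnion.2 ⟨i, ?_⟩
    simp only [hB, Set.mem_setOf_eq]
    calc dist (d i) (x i) ≤ 2*(η:ℝ) := hdx i
    _ < (ρ:ℝ) := by rw [hρR]; linarith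


theorem Zid_is_ideal {H : Type*} [MetricSpace H] [CompleteSpace H] [TopologicalSpace.SeparableSpace H]
    [AddCommGroup H] [IsTopologicalAddGroup H] [Uncountable H]
    (D : AddSubgroup H) (hDcount : (D : Set H).Countable) (hDdense : Dense (D : Set H))
    (hstar : PropertyStar D) :
    (∀ X ∈ Zid D, ∀ Y : Set (IndexElem H D), Y ⊆ X → Y ∈ Zid D) ∧
    (∀ X ∈ Zid D, ∀ Y ∈ Zid D, X ∪ Y ∈ Zid D) ∧
    (∀ X : Set (IndexElem H D), X.Finite → X ∈ Zid D) ∧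
    (Set.univ : Set (IndexElem H D)) ∉ Zid D := by
  constructor
  · rintro X ⟨u, hufin, hu⟩ Y hYX
    exact ⟨u, hufin, fun a ha => hu a (hYX ha)⟩
  constructor
  · rintro X ⟨u, hufin, hu⟩ Y ⟨v, hvfin, hv⟩
    refine ⟨u ∪ v, hufin.union hvfin, ?_⟩
    rintro a (ha | ha) hsub
    · exact hu a ha (fun w hw => hsub (Or.inl hw))
    · exact hv a ha (fun w hw => hsub (Or.inr hw))
  constructor
  · intro X hX
    have hpt : ∀ a : IndexElem H D, ∃ p : H, p ∉ UA a := by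
      intro a
      exact Set.ne_univ_iff_exists_notMem _ |>.1 a.proper
    choose g hg using hpt
    refine ⟨g '' X, hX.image g, ?_⟩
    intro a ha hsub
    exact hg a (hsub ⟨a, ha, rfl⟩)
  · rintro ⟨u, hufin, hbad⟩
    obtain ⟨a, ha⟩ := exists_cover D hDdense hstar u hufin
    exact hbad a (Set.mem_univ a) ha
end

section
/- If H is σ-compact (a countable union of compact subsets), then Z, viewed as a subset of the Cantor space 2^A of subsets of A (via characteristic functions along a fixed enumeration of the countable set A), is an F_σ set. -/
open Pointwise

lemma isOpen_UA {H : Type*} [MetricSpace H] [AddCommGroup H] {D : AddSubgroup H}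
    (a : IndexElem H D) : IsOpen (UA a) := by
  refine isOpen_iUnion fun i => ?_
  obtain ⟨c, -, ε, -, hB⟩ := a.isBall i
  rw [hB]
  exact isOpen_lt (continuous_const.dist continuous_id) continuous_const

theorem Zid_Fsigma {H : Type*} [MetricSpace H] [CompleteSpace H] [TopologicalSpace.SeparableSpace H]
    [AddCommGroup H] [IsTopologicalAddGroup H] [Uncountable H]
    (D : AddSubgroup H) (hDcount : (D : Set H).Countable) (hDdense : Dense (D : Set H))
    (hstar : PropertyStar D) [SigmaCompactSpace H] (e : ℕ ≃ IndexElem H D) :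
    ∃ C : ℕ → Set (ℕ → Bool), (∀ k, IsClosed (C k)) ∧
      {x : ℕ → Bool | (fun n => e n) '' {n : ℕ | x n = true} ∈ Zid D} = ⋃ k, C k := by
  classical
  set K : ℕ → Set H := compactCovering H with hK
  -- the closed pieces, indexed by (m, n)
  set C' : ℕ → ℕ → Set (ℕ → Bool) := fun m n =>
    {x : ℕ → Bool | ∃ v : Fin n → H, (∀ i, v i ∈ K m) ∧
      ∀ k : ℕ, x k = true → ∃ i, v i ∉ UA (e k)} with hC'
  refine ⟨fun k => C' (Nat.unpair k).1 (Nat.unpair k).2, ?_, ?_⟩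
  · -- closedness
    have main : ∀ m n : ℕ, IsClosed (C' m n) := ?_
    · exact fun k => main _ _
    intro m n
    haveI : CompactSpace (K m) :=
      isCompact_iff_compactSpace.mp (isCompact_compactCovering H m)
    set T : Set ((Fin n → K m) × (ℕ → Bool)) :=
      {p | ∀ k : ℕ, p.2 k = true → ∃ i, (p.1 i : H) ∉ UA (e k)} with hT
    have hTclosed : IsClosed T := by
      have : T = ⋂ k : ℕ, ({p : (Fin n → K m) × (ℕ → Bool) | p.2 k = true}ᶜ ∪
          ⋃ i : Fin n, (fun p : (Fin n → K m) × (ℕ → Bool) => (p.1 i : H)) ⁻¹' (UA (e k))ᶜ) := by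
        ext p
        simp only [hT, Set.mem_setOf_eq, Set.mem_iInter, Set.mem_union, Set.mem_compl_iff,
          Set.mem_iUnion, Set.mem_preimage, imp_iff_not_or]
      rw [this]
      refine isClosed_iInter fun k => IsClosed.union ?_ ?_
      · refine IsOpen.isClosed_compl ?_
        have : {p : (Fin n → K m) × (ℕ → Bool) | p.2 k = true} =
            (fun p : (Fin n → K m) × (ℕ → Bool) => p.2 k) ⁻¹' {true} := rfl
        rw [this]
        exact (isOpen_discrete _).preimage ((continuous_apply k).comp continuous_snd)
      · refine isClosed_iUnion_of_finite fun i => ?_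
        exact (isOpen_UA (e k)).isClosed_compl.preimage
          (continuous_subtype_val.comp ((continuous_apply i).comp continuous_fst))
    have himg : C' m n = Prod.snd '' T := by
      ext x
      simp only [hC', Set.mem_setOf_eq, Set.mem_image, Prod.exists]
      constructor
      · rintro ⟨v, hvK, hv⟩
        exact ⟨fun i => ⟨v i, hvK i⟩, x, hv, rfl⟩
      · rintro ⟨w, y, hw, rfl⟩
        exact ⟨fun i => (w i : H), fun i => (w i).2, hw⟩
    rw [himg]
    exact isClosedMap_snd_of_compactSpace T hTclosed
  · -- set equality
    ext x
    simp only [Set.mem_setOf_eq, Set.mem_iUnion]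
    constructor
    · rintro ⟨u, hufin, hu⟩
      obtain ⟨n, f, -, hf⟩ := hufin.fin_param
      -- find m with u ⊆ K m
      have hm : ∀ i : Fin n, ∃ m, f i ∈ K m := fun i => exists_mem_compactCovering (f i)
      choose g hg using hm
      set m : ℕ := Finset.univ.sup g with hmdef
      refine ⟨Nat.pair m n, ?_⟩
      simp only [Nat.unpair_pair]
      refine ⟨f, fun i => compactCovering_subset H (Finset.le_sup (Finset.mem_univ i)) (hg i),
        fun k hk => ?_⟩
      have hmem : e k ∈ (fun n => e n) '' {n : ℕ | x n = true} :=
        ⟨k, hk, rfl⟩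
      have := hu (e k) hmem
      by_contra hcon
      push_neg at hcon
      exact this (by rw [← hf]; rintro y ⟨i, rfl⟩; exact hcon i)
    · rintro ⟨k, hk⟩
      obtain ⟨v, hvK, hv⟩ := hk
      refine ⟨Set.range v, Set.finite_range v, ?_⟩
      rintro a ⟨j, hj, rfl⟩
      obtain ⟨i, hi⟩ := hv j hj
      intro hsub
      exact hi (hsub ⟨i, rfl⟩)
end

section
/- For all x, y ∈ H, the set {a ∈ A : f_a(x) ⊕ f_a(y) ≠ f_a(x ⊕ y)} is contained in {a ∈ A : {x, y, x ⊕ y} ⊄ U^a}; in particular it belongs to Z, witnessed by the finite set u = {x, y, x ⊕ y}. -/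
open Pointwise

lemma fmap_eq {H : Type*} [MetricSpace H] [AddCommGroup H] {D : AddSubgroup H}
    (a : IndexElem H D) {x : H} {i : Fin a.n} (hx : x ∈ a.U i) :
    fmap a x = x - a.r i := by
  have h : ∃ i, x ∈ a.U i := ⟨i, hx⟩
  have hc : h.choose = i := by
    by_contra hne
    exact (a.disj _ _ hne).ne_of_mem h.choose_spec hx rfl
  simp [fmap, dif_pos h, hc]

lemma fmap_add {H : Type*} [MetricSpace H] [AddCommGroup H] {D : AddSubgroup H}
    (a : IndexElem H D) {x y : H} (h : ({x, y, x + y} : Set H) ⊆ UA a) :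
    fmap a x + fmap a y = fmap a (x + y) := by
  obtain ⟨_, ⟨i, rfl⟩, hxi⟩ : x ∈ ⋃ l, a.U l := h (by simp)
  obtain ⟨_, ⟨j, rfl⟩, hyj⟩ : y ∈ ⋃ l, a.U l := h (by simp)
  have hxy : x + y ∈ (a.U i + a.U j) ∩ (⋃ l, a.U l) :=
    ⟨Set.add_mem_add hxi hyj, h (by simp)⟩
  rcases a.cond i j with ⟨k, hrk, hsub⟩ | hemp
  · rw [fmap_eq a hxi, fmap_eq a hyj, fmap_eq a (hsub hxy), ← hrk]
    abel
  · exact absurd hxy (by simp [hemp])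

theorem fmap_defect_mem_Zid {H : Type*} [MetricSpace H] [CompleteSpace H] [TopologicalSpace.SeparableSpace H]
    [AddCommGroup H] [IsTopologicalAddGroup H] [Uncountable H]
    (D : AddSubgroup H) (hDcount : (D : Set H).Countable) (hDdense : Dense (D : Set H))
    (hstar : PropertyStar D) (x y : H) :
    ({a : IndexElem H D | fmap a x + fmap a y ≠ fmap a (x + y)} ⊆
      {a : IndexElem H D | ¬ ({x, y, x + y} : Set H) ⊆ UA a}) ∧
    (∀ a ∈ {a : IndexElem H D | fmap a x + fmap a y ≠ fmap a (x + y)},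
      ¬ ({x, y, x + y} : Set H) ⊆ UA a) ∧
    {a : IndexElem H D | fmap a x + fmap a y ≠ fmap a (x + y)} ∈ Zid D := by
  have key : ∀ a : IndexElem H D, fmap a x + fmap a y ≠ fmap a (x + y) →
      ¬ ({x, y, x + y} : Set H) ⊆ UA a := fun a hne h => hne (fmap_add a h)
  exact ⟨fun a ha => key a ha, fun a ha => key a ha,
    ⟨{x, y, x + y}, Set.toFinite _,
      fun a ha => key a ha⟩⟩
end

section
/- The map f : H → H^A is Borel measurable and is a Z-approximate homomorphism, i.e., for all x, y ∈ H the set {a ∈ A : f_a(x) ⊕ f_a(y) ≠ f_a(x ⊕ y)} belongs to Z. -/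
open Pointwise

section Aux

variable {H : Type*} [MetricSpace H] [AddCommGroup H] {D : AddSubgroup H}

theorem fmap_eq_of_mem (a : IndexElem H D) {x : H} {i : Fin a.n} (hx : x ∈ a.U i) :
    fmap a x = x - a.r i := by
  have h : ∃ j, x ∈ a.U j := ⟨i, hx⟩
  classical
  rw [fmap]
  rw [dif_pos h]
  congr 1
  congr 1
  by_contra hne
  exact (a.disj _ _ hne).ne_of_mem h.choose_spec hx rfl

theorem fmap_eq_zero (a : IndexElem H D) {x : H} (hx : ¬ ∃ i, x ∈ a.U i) :
    fmap a x = 0 := by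
  classical
  rw [fmap]
  rw [dif_neg hx]

theorem fmap_eq_sum (a : IndexElem H D) (x : H) :
    fmap a x = ∑ i : Fin a.n, (a.U i).indicator (fun y => y - a.r i) x := by
  classical
  by_cases h : ∃ i, x ∈ a.U i
  · obtain ⟨i, hi⟩ := h
    rw [fmap_eq_of_mem a hi, Finset.sum_eq_single i]
    · rw [Set.indicator_of_mem hi]
    · intro j _ hj
      exact Set.indicator_of_notMem
        (fun hxj => (a.disj j i hj).ne_of_mem hxj hi rfl) _
    · intro hi'; exact absurd (Finset.mem_univ i) hi'
  · rw [fmap_eq_zero a h]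
    symm
    apply Finset.sum_eq_zero
    intro j _
    exact Set.indicator_of_notMem (fun hxj => h ⟨j, hxj⟩) _

theorem U_measurable [MeasurableSpace H] [BorelSpace H] (a : IndexElem H D) (i : Fin a.n) :
    MeasurableSet (a.U i) := by
  obtain ⟨c, _, ε, _, hU⟩ := a.isBall i
  rw [hU]
  exact (isOpen_lt (continuous_const.dist continuous_id) continuous_const).measurableSet

end Aux

theorem fmap_borel_approx_hom {H : Type*} [MetricSpace H] [CompleteSpace H] [TopologicalSpace.SeparableSpace H]
    [AddCommGroup H] [IsTopologicalAddGroup H] [Uncountable H]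
    (D : AddSubgroup H) (hDcount : (D : Set H).Countable) (hDdense : Dense (D : Set H))
    (hstar : PropertyStar D) [MeasurableSpace H] [BorelSpace H] :
    Measurable (fun x : H => fun a : IndexElem H D => fmap a x) ∧
    ∀ x y : H, {a : IndexElem H D | fmap a x + fmap a y ≠ fmap a (x + y)} ∈ Zid D := by
  constructor
  · apply measurable_pi_lambda
    intro a
    have : (fun x : H => fmap a x) =
        fun x => ∑ i : Fin a.n, (a.U i).indicator (fun y => y - a.r i) x := by
      funext x; exact fmap_eq_sum a x
    rw [this]
    apply Finset.measurable_sum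
    intro i _
    exact ((continuous_id.sub continuous_const).measurable).indicator (U_measurable a i)
  · intro x y
    refine ⟨{x, y, x + y}, (Set.finite_singleton _).insert _ |>.insert _, ?_⟩
    intro a ha hsub
    have hx : x ∈ UA a := hsub (by simp)
    have hy : y ∈ UA a := hsub (by simp)
    have hxy : x + y ∈ UA a := hsub (by simp)
    obtain ⟨_, ⟨i, rfl⟩, hxi⟩ := hx
    obtain ⟨_, ⟨j, rfl⟩, hyj⟩ := hy
    rcases a.cond i j with ⟨k, hrk, hUk⟩ | hemp
    · have hxyk : x + y ∈ a.U k :=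
        hUk ⟨Set.add_mem_add hxi hyj, hxy⟩
      apply ha
      rw [fmap_eq_of_mem a hxi, fmap_eq_of_mem a hyj, fmap_eq_of_mem a hxyk, ← hrk]
      abel
    · exact (Set.eq_empty_iff_forall_notMem.mp hemp (x + y))
        ⟨Set.add_mem_add hxi hyj, hxy⟩
end

section
/- For every finite set u ⊆ H and every nonempty rational ball B ⊆ H, there exists a ∈ A such that u ⊆ U^a, U^a ∩ B ≠ ∅, and there is a nonempty rational ball B' ⊆ B with B' ∩ U^a = ∅ (so that B ∖ U^a is nonempty and not dense in B). -/
open Pointwise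

-- helper 1: min positive distance in a finite set
theorem aux_finset_min_dist {H : Type*} [MetricSpace H] (s : Finset H) :
    ∃ Δ : ℝ, 0 < Δ ∧ ∀ w ∈ s, ∀ w' ∈ s, w ≠ w' → Δ ≤ dist w w' := by
  classical
  let S : Finset (H × H) := (s ×ˢ s).filter (fun p => p.1 ≠ p.2)
  have hmem : ∀ w ∈ s, ∀ w' ∈ s, w ≠ w' → (w, w') ∈ S := by
    intro w hw w' hw' hne'
    exact Finset.mem_filter.2 ⟨Finset.mem_product.2 ⟨hw, hw'⟩, hne'⟩
  by_cases hne : S.Nonempty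
  · refine ⟨S.inf' hne (fun p => dist p.1 p.2), ?_, ?_⟩
    · rw [Finset.lt_inf'_iff]
      rintro ⟨w, w'⟩ hp
      have := (Finset.mem_filter.1 hp).2
      exact dist_pos.2 this
    · intro w hw w' hw' hne'
      exact Finset.inf'_le (fun p => dist p.1 p.2) (hmem w hw w' hw' hne')
  · refine ⟨1, one_pos, ?_⟩
    intro w hw w' hw' hne'
    exact absurd ⟨(w, w'), hmem w hw w' hw' hne'⟩ hne

-- helper 2: distance from a point not in the finite set
theorem aux_finset_dist_pos {H : Type*} [MetricSpace H] (s : Finset H) (y : H) (hy : y ∉ s) :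
    ∃ ζ : ℝ, 0 < ζ ∧ ∀ w ∈ s, ζ ≤ dist y w := by
  classical
  by_cases hne : s.Nonempty
  · refine ⟨s.inf' hne (fun w => dist y w), ?_, ?_⟩
    · rw [Finset.lt_inf'_iff]
      intro w hw
      exact dist_pos.2 (fun h => hy (h ▸ hw))
    · intro w hw; exact Finset.inf'_le (fun w => dist y w) hw
  · exact ⟨1, one_pos, fun w hw => absurd ⟨w, hw⟩ hne⟩

-- helper 3: open nonempty set avoids a finite set
theorem aux_exists_mem_open_not_mem {H : Type*} [MetricSpace H] [AddCommGroup H]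
    [IsTopologicalAddGroup H] [Uncountable H] (D : Set H) (hDc : D.Countable) (hDd : Dense D)
    (B : Set H) (hB : IsOpen B) (hBne : B.Nonempty) (W : Set H) (hW : W.Finite) :
    ∃ y ∈ B, y ∉ W := by
  by_contra h
  push_neg at h
  have hBfin : B.Finite := hW.subset h
  obtain ⟨x, hx⟩ := hBne
  have hxopen : IsOpen ({x} : Set H) := by
    have h1 : IsClosed (B \ {x}) := (hBfin.diff (t := {x})).isClosed
    have : B ∩ (B \ {x})ᶜ = {x} := by
      ext z
      simp only [Set.mem_inter_iff, Set.mem_compl_iff, Set.mem_diff, Set.mem_singleton_iff]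
      constructor
      · rintro ⟨hzB, hz⟩
        by_contra hzx
        exact hz ⟨hzB, hzx⟩
      · rintro rfl
        exact ⟨hx, fun hc => hc.2 rfl⟩
    exact this ▸ hB.inter h1.isOpen_compl
  have hall : ∀ y : H, IsOpen ({y} : Set H) := by
    intro y
    have hc : Continuous (fun z : H => z + (x - y)) := continuous_id.add continuous_const
    have : (fun z : H => z + (x - y)) ⁻¹' {x} = {y} := by
      ext z
      simp only [Set.mem_preimage, Set.mem_singleton_iff]
      constructor
      · intro hz
        have h2 : z + (x - y) = y + (x - y) := by rw [hz]; abel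
        exact add_right_cancel h2
      · rintro rfl; abel
    exact this ▸ hxopen.preimage hc
  have hsub : (Set.univ : Set H) ⊆ D := by
    intro y _
    obtain ⟨z, hz1, hz2⟩ := hDd.inter_open_nonempty {y} (hall y) ⟨y, rfl⟩
    rwa [Set.mem_singleton_iff.1 hz1] at hz2
  have : (Set.univ : Set H).Countable := hDc.mono hsub
  exact not_countable (Set.countable_univ_iff.1 this)

-- helper 4: sum with indicator coefficients
theorem aux_sum_coeff {H : Type*} [AddCommGroup H] {m : ℕ} (p q k : Fin m) (x : Fin m → H) :
    ∑ i, (((if i = p then (1:ℤ) else 0) + (if i = q then 1 else 0) - (if i = k then 1 else 0)) • x i)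
      = x p + x q - x k := by
  classical
  simp [sub_smul, add_smul, ite_smul, Finset.sum_sub_distrib, Finset.sum_add_distrib,
    Finset.sum_ite_eq']

theorem exists_indexElem_covering_u_meeting_ball {H : Type*} [MetricSpace H] [CompleteSpace H] [TopologicalSpace.SeparableSpace H]
    [AddCommGroup H] [IsTopologicalAddGroup H] [Uncountable H]
    (D : AddSubgroup H) (hDcount : (D : Set H).Countable) (hDdense : Dense (D : Set H))
    (hstar : PropertyStar D)
    (u : Set H) (hu : u.Finite) (B : Set H)
    (hB : IsRationalBall (D : Set H) B) (hBne : B.Nonempty) :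
    ∃ a : IndexElem H D, u ⊆ UA a ∧ (UA a ∩ B).Nonempty ∧
      ∃ B' : Set H, IsRationalBall (D : Set H) B' ∧ B'.Nonempty ∧ B' ⊆ B ∧
        B' ∩ UA a = ∅ := by
  classical
  obtain ⟨cB, hcBD, εB, hεBpos, hBeq⟩ := hB
  have hεBR : (0:ℝ) < (εB : ℝ) := by exact_mod_cast hεBpos
  have hcBB : cB ∈ B := by rw [hBeq]; simpa using hεBR
  -- the finite set of "targets"
  set F : Finset H := hu.toFinset ∪ {cB} with hF
  have hcBF : cB ∈ F := by simp [hF]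
  have huF : ∀ x ∈ u, x ∈ F := by intro x hx; simp [hF, hu.mem_toFinset.2 hx]
  set m : ℕ := F.card with hmdef
  have hm : 0 < m := Finset.card_pos.2 ⟨cB, hcBF⟩
  haveI : Nonempty (Fin m) := ⟨⟨0, hm⟩⟩
  set e : Fin m → H := fun i => ((F.equivFin.symm i : F) : H) with he
  have he_inj : Function.Injective e := by
    intro i j hij
    have := Subtype.coe_injective hij
    exact F.equivFin.symm.injective this
  have he_mem : ∀ i, e i ∈ F := fun i => (F.equivFin.symm i).2
  have he_surj : ∀ x ∈ F, ∃ i, e i = x := by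
    intro x hx
    exact ⟨F.equivFin ⟨x, hx⟩, by simp [he]⟩
  -- the finite set W of targets and their pairwise sums
  set WF : Finset H := F ∪ Finset.image (fun pq : Fin m × Fin m => e pq.1 + e pq.2)
    Finset.univ with hWF
  have hEW : ∀ i, e i ∈ WF := fun i => Finset.mem_union_left _ (he_mem i)
  have hSW : ∀ i j : Fin m, e i + e j ∈ WF := fun i j =>
    Finset.mem_union_right _ (Finset.mem_image.2 ⟨(i, j), Finset.mem_univ _, rfl⟩)
  obtain ⟨Δ, hΔpos, hΔ⟩ := aux_finset_min_dist WF
  -- pick y in B avoiding WF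
  have hBopen : IsOpen B := by
    rw [hBeq]
    exact isOpen_lt (continuous_const.dist continuous_id) continuous_const
  obtain ⟨y, hyB, hyW⟩ := aux_exists_mem_open_not_mem (D : Set H) hDcount hDdense B hBopen
    hBne (WF : Set H) WF.finite_toSet
  obtain ⟨ζ1, hζ1pos, hζ1⟩ := aux_finset_dist_pos WF y (by simpa using hyW)
  have hyBd : dist cB y < (εB : ℝ) := by rw [hBeq] at hyB; exact hyB
  set ζ2 : ℝ := (εB : ℝ) - dist cB y with hζ2
  have hζ2pos : 0 < ζ2 := by simp [hζ2]; linarith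
  -- the scale η
  set η : ℝ := min Δ (min ζ1 ζ2) / 8 with hη
  have hηpos : 0 < η := by
    have := lt_min hΔpos (lt_min hζ1pos hζ2pos)
    simp only [hη]; linarith
  have hηΔ : 8 * η ≤ Δ := by
    have := min_le_left Δ (min ζ1 ζ2); simp only [hη]; linarith
  have hηζ1 : 8 * η ≤ ζ1 := by
    have h1 := min_le_right Δ (min ζ1 ζ2)
    have h2 := min_le_left ζ1 ζ2
    simp only [hη]; linarith
  have hηζ2 : 8 * η ≤ ζ2 := by
    have h1 := min_le_right Δ (min ζ1 ζ2)
    have h2 := min_le_right ζ1 ζ2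
    simp only [hη]; linarith
  -- continuity of addition at the pairs
  have hcont : ∀ pq : Fin m × Fin m, ∃ δ : ℝ, 0 < δ ∧ ∀ a b : H,
      dist a (e pq.1) < δ → dist b (e pq.2) < δ → dist (a + b) (e pq.1 + e pq.2) < η := by
    intro pq
    have h1 : ContinuousAt (fun p : H × H => p.1 + p.2) (e pq.1, e pq.2) :=
      continuous_add.continuousAt
    rw [Metric.continuousAt_iff] at h1
    obtain ⟨δ, hδ, hh⟩ := h1 η hηpos
    refine ⟨δ, hδ, fun a b ha hb => ?_⟩
    have := hh (x := (a, b)) (by rw [Prod.dist_eq]; exact max_lt ha hb)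
    exact this
  choose δf hδfpos hδf using hcont
  set δmin : ℝ := Finset.univ.inf' Finset.univ_nonempty δf with hδmin
  have hδminpos : 0 < δmin := by
    rw [hδmin, Finset.lt_inf'_iff]
    exact fun pq _ => hδfpos pq
  have hδminle : ∀ pq : Fin m × Fin m, δmin ≤ δf pq := fun pq =>
    Finset.inf'_le δf (Finset.mem_univ pq)
  set θ : ℝ := min η (δmin / 3) with hθ
  have hθpos : 0 < θ := lt_min hηpos (by linarith)
  have hθη : θ ≤ η := min_le_left _ _
  have hθδ : 2 * θ < δmin := by
    have := min_le_right η (δmin / 3); simp only [hθ] at *; linarith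
  have key : ∀ (i j : Fin m) (a b : H), dist a (e i) ≤ 2 * θ → dist b (e j) ≤ 2 * θ →
      dist (a + b) (e i + e j) < η := by
    intro i j a b ha hb
    exact hδf (i, j) a b (lt_of_le_of_lt ha (lt_of_lt_of_le hθδ (hδminle (i, j))))
      (lt_of_le_of_lt hb (lt_of_lt_of_le hθδ (hδminle (i, j))))
  -- choose rational ε < θ/2
  obtain ⟨ε, hε1, hε2⟩ := exists_rat_btwn (by linarith : (0:ℝ) < θ / 2)
  have hεpos : 0 < ε := by exact_mod_cast hε1
  -- centers in D near the targets
  have hcex : ∀ i : Fin m, ∃ ci, ci ∈ (D : Set H) ∧ dist (e i) ci < (ε : ℝ) := by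
    intro i
    exact Metric.mem_closure_iff.1 (hDdense (e i)) _ hε1
  choose c hcD hcdist using hcex
  -- the system of equations
  set T : Finset (Fin m × Fin m × Fin m) :=
    Finset.univ.filter (fun t => e t.1 + e t.2.1 = e t.2.2) with hT
  set P : Finset ((Fin m → ℤ) × H) := T.image (fun t =>
    (fun i => (if i = t.1 then (1:ℤ) else 0) + (if i = t.2.1 then 1 else 0)
      - (if i = t.2.2 then 1 else 0), (0:H))) with hP
  have hPD : ∀ p ∈ P, p.2 ∈ D := by
    intro p hp
    obtain ⟨t, _, rfl⟩ := Finset.mem_image.1 hp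
    exact zero_mem D
  have hHsol : ∃ x : Fin m → H, (∀ i, dist (x i) (c i) ≤ (ε : ℝ)) ∧
      ∀ p ∈ P, ∑ i, p.1 i • x i = p.2 := by
    refine ⟨e, fun i => (hcdist i).le, ?_⟩
    intro p hp
    obtain ⟨t, ht, rfl⟩ := Finset.mem_image.1 hp
    have h1 := aux_sum_coeff t.1 t.2.1 t.2.2 e
    have h2 : e t.1 + e t.2.1 = e t.2.2 := (Finset.mem_filter.1 ht).2
    simpa [h1, sub_eq_zero] using h2
  obtain ⟨g, hg, hgeq⟩ := hstar m hm c hcD ε hεpos P hPD hHsol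
  have hgD : ∀ i, g i ∈ D := fun i => (hg i).1
  have hge : ∀ i, dist (g i) (e i) ≤ 2 * (ε : ℝ) := by
    intro i
    calc dist (g i) (e i) ≤ dist (g i) (c i) + dist (c i) (e i) := dist_triangle _ _ _
      _ ≤ (ε : ℝ) + (ε : ℝ) := add_le_add (hg i).2 (by rw [dist_comm]; exact (hcdist i).le)
      _ = 2 * (ε : ℝ) := by ring
  have hgadd : ∀ i j k : Fin m, e i + e j = e k → g i + g j = g k := by
    intro i j k hk
    have htm : (i, j, k) ∈ T := Finset.mem_filter.2 ⟨Finset.mem_univ _, hk⟩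
    have hpm := hgeq _ (Finset.mem_image.2 ⟨(i, j, k), htm, rfl⟩)
    have h1 := aux_sum_coeff i j k g
    rw [h1] at hpm
    exact sub_eq_zero.1 (by simpa using hpm)
  -- radius lam
  have h2eθ : 2 * (ε : ℝ) < θ := by linarith
  obtain ⟨lam, hlam1, hlam2⟩ := exists_rat_btwn h2eθ
  have hlamR : (0:ℝ) < (lam : ℝ) := lt_of_le_of_lt (by positivity) hlam1
  have hlampos : 0 < lam := by exact_mod_cast hlamR
  -- the point q and radius ρ for B'
  obtain ⟨q, hqD, hqdist⟩ := Metric.mem_closure_iff.1 (hDdense y) η hηpos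
  obtain ⟨ρ, hρ1, hρ2⟩ := exists_rat_btwn hηpos
  have hρpos : 0 < ρ := by exact_mod_cast hρ1
  -- the balls
  set U : Fin m → Set H := fun i => {x | dist (g i) x < (lam : ℝ)} with hUdef
  have hgeU : ∀ i, dist (g i) (e i) < (lam : ℝ) := fun i => lt_of_le_of_lt (hge i) hlam1
  have factB : ∀ (i : Fin m) (x : H), x ∈ U i → dist (e i) x < 2 * θ := by
    intro i x hx
    have hx' : dist (g i) x < (lam : ℝ) := hx
    calc dist (e i) x ≤ dist (e i) (g i) + dist (g i) x := dist_triangle _ _ _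
      _ < θ + θ := add_lt_add
          (by rw [dist_comm]; exact lt_of_le_of_lt (hge i) (by linarith))
          (lt_trans hx' hlam2)
      _ = 2 * θ := by ring
  have factC : ∀ (i j : Fin m) (x₁ x₂ : H), x₁ ∈ U i → x₂ ∈ U j →
      dist (x₁ + x₂) (e i + e j) < η := by
    intro i j x₁ x₂ h1 h2
    exact key i j x₁ x₂ (by rw [dist_comm]; exact (factB i x₁ h1).le)
      (by rw [dist_comm]; exact (factB j x₂ h2).le)
  have factE : ∀ x : H, dist q x < (ρ : ℝ) → ∀ l : Fin m, x ∉ U l := by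
    intro x hx l hxl
    have h1 : dist (e l) x < 2 * θ := factB l x hxl
    have h2 : ζ1 ≤ dist y (e l) := hζ1 _ (hEW l)
    have h3 : dist y (e l) ≤ dist y q + dist q x + dist x (e l) := dist_triangle4 _ _ _ _
    rw [dist_comm x (e l)] at h3
    linarith
  have memU : ∀ (i : Fin m) (x : H), dist (g i) x < (lam : ℝ) → x ∈ U i := fun i x hx => hx
  have hselfU : ∀ i : Fin m, g i ∈ U i := by
    intro i
    exact memU i (g i) (by rw [dist_self]; exact hlamR)
  -- assemble the IndexElem
  refine ⟨⟨m, U, g, ?_, ?_, ?_, ?_, ?_, ?_, ?_, ?_⟩, ?_, ?_, ?_⟩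
  · -- isBall
    exact fun i => ⟨g i, hgD i, lam, hlampos, rfl⟩
  · -- ballNe
    exact fun i => ⟨g i, hselfU i⟩
  · -- disj
    intro i j hij
    rw [Set.disjoint_left]
    intro x hx hx'
    have h1 := factB i x hx
    have h2 := factB j x hx'
    have hd : Δ ≤ dist (e i) (e j) :=
      hΔ _ (hEW i) _ (hEW j) (fun hh => hij (he_inj hh))
    have h3 : dist (e i) (e j) ≤ dist (e i) x + dist x (e j) := dist_triangle _ _ _
    rw [dist_comm x (e j)] at h3
    linarith
  · -- unionNe
    exact ⟨g ⟨0, hm⟩, Set.mem_iUnion.2 ⟨⟨0, hm⟩, hselfU _⟩⟩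
  · -- proper
    intro hcontra
    have hq : q ∈ ⋃ l, U l := hcontra ▸ Set.mem_univ q
    obtain ⟨l, hl⟩ := Set.mem_iUnion.1 hq
    have : (0:ℝ) < (ρ : ℝ) := by exact_mod_cast hρ1
    exact factE q (by rw [dist_self]; exact this) l hl
  · -- rMemU
    exact hselfU
  · -- rMemD
    exact hgD
  · -- cond
    intro i j
    by_cases hk : ∃ k, e i + e j = e k
    · obtain ⟨k, hkeq⟩ := hk
      refine Or.inl ⟨k, hgadd i j k hkeq, ?_⟩
      rintro x ⟨hxsum, hxU⟩
      obtain ⟨x₁, hx₁, x₂, hx₂, rfl⟩ := Set.mem_add.1 hxsum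
      obtain ⟨l, hl⟩ := Set.mem_iUnion.1 hxU
      have h1 : dist (x₁ + x₂) (e k) < η := by
        rw [← hkeq]; exact factC i j x₁ x₂ hx₁ hx₂
      have h2 : dist (e l) (x₁ + x₂) < 2 * θ := factB l _ hl
      have h3 : e k = e l := by
        by_contra hne
        have hd := hΔ _ (hEW k) _ (hEW l) hne
        have h4 : dist (e k) (e l) ≤ dist (e k) (x₁ + x₂) + dist (x₁ + x₂) (e l) :=
          dist_triangle _ _ _
        rw [dist_comm (e k) (x₁ + x₂), dist_comm (x₁ + x₂) (e l)] at h4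
        linarith
      have hlk : k = l := he_inj h3
      exact hlk ▸ hl
    · refine Or.inr (Set.eq_empty_iff_forall_notMem.2 ?_)
      rintro x ⟨hxsum, hxU⟩
      obtain ⟨x₁, hx₁, x₂, hx₂, rfl⟩ := Set.mem_add.1 hxsum
      obtain ⟨l, hl⟩ := Set.mem_iUnion.1 hxU
      have h1 := factC i j x₁ x₂ hx₁ hx₂
      have h2 := factB l _ hl
      have h3 : e i + e j = e l := by
        by_contra hne
        have hd := hΔ _ (hSW i j) _ (hEW l) hne
        have h4 : dist (e i + e j) (e l) ≤ dist (e i + e j) (x₁ + x₂) + dist (x₁ + x₂) (e l) :=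
          dist_triangle _ _ _
        rw [dist_comm (e i + e j) (x₁ + x₂), dist_comm (x₁ + x₂) (e l)] at h4
        linarith
      exact hk ⟨l, h3⟩
  · -- u ⊆ UA
    intro x hx
    obtain ⟨i, hi⟩ := he_surj x (huF x hx)
    exact Set.mem_iUnion.2 ⟨i, memU i x (hi ▸ hgeU i)⟩
  · -- UA meets B
    obtain ⟨i0, hi0⟩ := he_surj cB hcBF
    refine ⟨g i0, Set.mem_iUnion.2 ⟨i0, hselfU i0⟩, ?_⟩
    rw [hBeq]
    show dist cB (g i0) < (εB : ℝ)
    have h1 : dist (e i0) (g i0) ≤ 2 * (ε : ℝ) := by rw [dist_comm]; exact hge i0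
    rw [← hi0]
    have hdy : (0:ℝ) ≤ dist cB y := dist_nonneg
    have hζ2' : ζ2 = (εB : ℝ) - dist cB y := hζ2
    linarith
  · -- the ball B'
    refine ⟨{x | dist q x < (ρ : ℝ)}, ⟨q, hqD, ρ, hρpos, rfl⟩,
      ⟨q, by simp only [Set.mem_setOf_eq, dist_self]; exact_mod_cast hρ1⟩, ?_, ?_⟩
    · intro x hx
      have hx' : dist q x < (ρ : ℝ) := hx
      rw [hBeq]
      show dist cB x < (εB : ℝ)
      have h3 : dist cB x ≤ dist cB y + dist y q + dist q x := dist_triangle4 _ _ _ _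
      have hζ2' : ζ2 = (εB : ℝ) - dist cB y := hζ2
      linarith
    · rw [Set.eq_empty_iff_forall_notMem]
      rintro x ⟨hx1, hx2⟩
      obtain ⟨l, hl⟩ := Set.mem_iUnion.1 hx2
      exact factE x hx1 l hl
end
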